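/- arXiv:1412.4151 — 5 statements merged into one kernel-verified Lean document; each statement's English description precedes it below -/
import Mathlib

section
/- Let V be a real topological vector space, H a real Hilbert space, j : V → H linear, and E : V → ℝ ∪ {+∞} a functional. If E is convex, then the j-subgradient ∂_j E, defined as the set of pairs (u,f) ∈ H × H such that there exists û ∈ D(E) with j(û) = u and liminf_{t→0⁺} (E(û+tv̂) − E(û))/t ≥ ⟨f, j(v̂)⟩ for all v̂ ∈ V, is cyclically monotone: for every finite sequence (u₀,f₀),…,(uₙ,fₙ) in ∂_j E with (u₀,f₀) = (uₙ,fₙ), one has Σ_{i=1}^n ⟨fᵢ, uᵢ − u_{i−1}⟩ ≥ 0. -/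
open Filter Topology

variable {V : Type*} [AddCommGroup V] [Module ℝ V] [TopologicalSpace V]
variable {H : Type*} [NormedAddCommGroup H] [InnerProductSpace ℝ H] [CompleteSpace H]

/-- The `j`-subgradient of a functional `E : V → ℝ ∪ {+∞}`. -/
def jSubgradient (j : V →ₗ[ℝ] H) (E : V → EReal) : Set (H × H) :=
  {p | ∃ u : V, E u < ⊤ ∧ j u = p.1 ∧ ∀ v : V,
    ((inner ℝ p.2 (j v) : ℝ) : EReal) ≤
      liminf (fun t : ℝ => (E (u + t • v) - E u) * ((t⁻¹ : ℝ) : EReal)) (𝓝[>] (0 : ℝ))}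

/-- Convexity of an extended real valued functional. -/
def ERealConvex (E : V → EReal) : Prop :=
  ∀ u v : V, ∀ t : ℝ, 0 ≤ t → t ≤ 1 →
    E (t • u + (1 - t) • v) ≤ (t : EReal) * E u + ((1 - t : ℝ) : EReal) * E v

set_option linter.unusedSectionVars false in
lemma key_lemma (j : V →ₗ[ℝ] H) (E : V → EReal) (hconv : ERealConvex E)
    (f : H) (w : V) (hlt : E w < ⊤)
    (hsub : ∀ v : V, ((inner ℝ f (j v) : ℝ) : EReal) ≤
      liminf (fun t : ℝ => (E (w + t • v) - E w) * ((t⁻¹ : ℝ) : EReal)) (𝓝[>] (0 : ℝ))) :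
    E w ≠ ⊥ ∧ ∀ v : V, ((inner ℝ f (j v) : ℝ) : EReal) ≤ E (w + v) - E w := by
  have hbot : E w ≠ ⊥ := by
    intro hb
    have h0 := hsub 0
    have hev : ∀ᶠ t : ℝ in 𝓝[>] (0:ℝ),
        (E (w + t • (0:V)) - E w) * ((t⁻¹ : ℝ) : EReal) ≤ ⊥ := by
      filter_upwards [self_mem_nhdsWithin] with t ht
      rw [smul_zero, add_zero, hb, EReal.bot_sub]
      rw [EReal.bot_mul_coe_of_pos (inv_pos.mpr ht)]
    have : liminf (fun t : ℝ => (E (w + t • (0:V)) - E w) * ((t⁻¹ : ℝ) : EReal)) (𝓝[>] (0:ℝ)) ≤ ⊥ :=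
      liminf_le_of_frequently_le hev.frequently
    have := h0.trans this
    simp [inner_zero_right] at this
  refine ⟨hbot, fun v => ?_⟩
  obtain ⟨c, hc⟩ : ∃ c : ℝ, E w = (c : EReal) := ⟨(E w).toReal, (EReal.coe_toReal hlt.ne hbot).symm⟩
  rcases eq_top_or_lt_top (E (w + v)) with htop | hlt2
  · rw [htop]
    rw [hc, EReal.top_sub_coe]; exact le_top
  refine le_trans (hsub v) ?_
  refine liminf_le_of_frequently_le ?_
  have hmem : Set.Ioo (0:ℝ) 1 ∈ 𝓝[>] (0:ℝ) := Ioo_mem_nhdsGT_of_mem ⟨le_refl 0, one_pos⟩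
  refine (Filter.eventually_of_mem hmem ?_).frequently
  intro t ⟨ht0, ht1⟩
  have hconvt := hconv (w + v) w t ht0.le ht1.le
  have heq : t • (w + v) + (1 - t) • w = w + t • v := by module
  rw [heq] at hconvt
  rcases eq_bot_or_bot_lt (E (w + v)) with hbv | hbv
  · have : E (w + t • v) = ⊥ := by
      refine le_bot_iff.mp ?_
      calc E (w + t • v) ≤ (t : EReal) * E (w + v) + ((1 - t : ℝ) : EReal) * E w := hconvt
        _ = ⊥ := by
          rw [hbv, EReal.mul_bot_of_pos (by exact_mod_cast ht0), EReal.bot_add]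
    rw [this, hc, EReal.bot_sub, EReal.bot_mul_coe_of_pos (by positivity)]
    exact bot_le
  · obtain ⟨y, hy⟩ : ∃ y : ℝ, E (w + v) = (y : EReal) :=
      ⟨(E (w + v)).toReal, (EReal.coe_toReal hlt2.ne hbv.ne').symm⟩
    rw [hy, hc] at hconvt ⊢
    rw [← EReal.coe_mul, ← EReal.coe_mul, ← EReal.coe_add] at hconvt
    rcases eq_bot_or_bot_lt (E (w + t • v)) with hb2 | hb2
    · rw [hb2, EReal.bot_sub, EReal.bot_mul_coe_of_pos (by positivity)]
      exact bot_le
    · have hnt : E (w + t • v) ≠ ⊤ := by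
        intro h; rw [h] at hconvt; exact (not_le.mpr (EReal.coe_lt_top _)) hconvt
      obtain ⟨x, hx⟩ : ∃ x : ℝ, E (w + t • v) = (x : EReal) :=
        ⟨(E (w + t • v)).toReal, (EReal.coe_toReal hnt hb2.ne').symm⟩
      rw [hx] at hconvt ⊢
      have hxr : x ≤ t * y + (1 - t) * c := by exact_mod_cast hconvt
      rw [← EReal.coe_sub, ← EReal.coe_mul, ← EReal.coe_sub]
      apply EReal.coe_le_coe_iff.mpr
      rw [mul_inv_le_iff₀ ht0]
      nlinarith

/-- if `E` is convex, then the `j`-subgradient is cyclically monotone. -/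
theorem jSubgradient_cyclicallyMonotone (j : V →ₗ[ℝ] H) (E : V → EReal)
    (hproper : ∃ u, E u < ⊤) (hconv : ERealConvex E)
    (n : ℕ) (u f : ℕ → H)
    (hmem : ∀ i ≤ n, (u i, f i) ∈ jSubgradient j E)
    (hcyc : u 0 = u n ∧ f 0 = f n) :
    0 ≤ ∑ i ∈ Finset.range n, (inner ℝ (f (i + 1)) (u (i + 1) - u i) : ℝ) := by
  rcases Nat.eq_zero_or_pos n with hn | hn
  · simp [hn]
  -- choose witnesses
  have hch : ∀ i, ∃ w : V, i ≤ n → E w < ⊤ ∧ j w = u i ∧ ∀ v : V,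
      ((inner ℝ (f i) (j v) : ℝ) : EReal) ≤
        liminf (fun t : ℝ => (E (w + t • v) - E w) * ((t⁻¹ : ℝ) : EReal)) (𝓝[>] (0 : ℝ)) := by
    intro i
    by_cases h : i ≤ n
    · obtain ⟨w, hw⟩ := hmem i h
      exact ⟨w, fun _ => hw⟩
    · exact ⟨0, fun h' => absurd h' h⟩
  choose w hw using hch
  -- shifted witnesses: index 0 uses the witness of index n
  set w' : ℕ → V := fun i => if i = 0 then w n else w i with hw'def
  have hj' : ∀ i ≤ n, j (w' i) = u i := by
    intro i hi
    by_cases h0 : i = 0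
    · simp only [hw'def, h0, if_pos rfl]
      rw [(hw n le_rfl).2.1, ← hcyc.1]
    · simp only [hw'def, if_neg h0]
      exact (hw i hi).2.1
  have hkey : ∀ i ≤ n, E (w' i) ≠ ⊥ ∧ E (w' i) < ⊤ := by
    intro i hi
    by_cases h0 : i = 0
    · simp only [hw'def, h0, if_pos rfl]
      exact ⟨(key_lemma j E hconv (f n) (w n) (hw n le_rfl).1 (hw n le_rfl).2.2).1,
        (hw n le_rfl).1⟩
    · simp only [hw'def, if_neg h0]
      exact ⟨(key_lemma j E hconv (f i) (w i) (hw i hi).1 (hw i hi).2.2).1, (hw i hi).1⟩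
  set a : ℕ → ℝ := fun i => (E (w' i)).toReal with hadef
  have hcoe : ∀ i ≤ n, E (w' i) = ((a i : ℝ) : EReal) := by
    intro i hi
    exact (EReal.coe_toReal (hkey i hi).2.ne (hkey i hi).1).symm
  have hstep : ∀ i ∈ Finset.range n, a (i+1) - a i ≤ (inner ℝ (f (i+1)) (u (i+1) - u i) : ℝ) := by
    intro i hi
    rw [Finset.mem_range] at hi
    have hi1 : i + 1 ≤ n := hi
    have hin : i ≤ n := le_of_lt hi
    have hKL := (key_lemma j E hconv (f (i+1)) (w (i+1)) (hw (i+1) hi1).1 (hw (i+1) hi1).2.2).2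
      (w' i - w (i+1))
    have hadd : w (i+1) + (w' i - w (i+1)) = w' i := by abel
    rw [hadd] at hKL
    have hjv : j (w' i - w (i+1)) = u i - u (i+1) := by
      rw [map_sub, hj' i hin, (hw (i+1) hi1).2.1]
    rw [hjv] at hKL
    have hw1 : w' (i+1) = w (i+1) := by simp [hw'def]
    have hE1 : E (w (i+1)) = ((a (i+1) : ℝ) : EReal) := by
      rw [← hw1]; exact hcoe (i+1) hi1
    rw [hcoe i hin, hE1, ← EReal.coe_sub] at hKL
    have hr : (inner ℝ (f (i+1)) (u i - u (i+1)) : ℝ) ≤ a i - a (i+1) :=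
      EReal.coe_le_coe_iff.mp hKL
    have : (inner ℝ (f (i+1)) (u (i+1) - u i) : ℝ) = -(inner ℝ (f (i+1)) (u i - u (i+1)) : ℝ) := by
      rw [← inner_neg_right, neg_sub]
    rw [this]
    linarith
  have hsum := Finset.sum_le_sum hstep
  rw [Finset.sum_range_sub (fun i => a i)] at hsum
  have han : a n = a 0 := by
    have : w' n = w' 0 := by simp [hw'def, hn.ne']
    simp [hadef, this]
  linarith
end

section
/- Let E : V → ℝ ∪ {+∞} be Gâteaux differentiable with derivative E'. Then (u,f) ∈ ∂_j E if and only if there exists û ∈ D(E) with j(û) = u and E'(û)(v̂) = ⟨f, j(v̂)⟩ for every v̂ ∈ V. -/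
open Filter Topology

variable {V : Type*} [AddCommGroup V] [Module ℝ V] [TopologicalSpace V]
variable {H : Type*} [NormedAddCommGroup H] [InnerProductSpace ℝ H] [CompleteSpace H]

/-- if `E` is Gâteaux differentiable with derivative `E'` (in the sense that the
one-sided difference quotients converge to the linear functional `E'(û)` at each point of the
effective domain), then `(u,f) ∈ ∂_j E` iff there exists `û ∈ D(E)` with `j(û) = u` and
`E'(û)(v̂) = ⟨f, j(v̂)⟩` for every `v̂ ∈ V`. -/
theorem jSubgradient_eq_gateaux (j : V →ₗ[ℝ] H) (hj : Continuous j) (E : V → EReal)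
    (E' : V → V →ₗ[ℝ] ℝ)
    (hdiff : ∀ u : V, E u < ⊤ → ∀ v : V,
      Tendsto (fun t : ℝ => (E (u + t • v) - E u) * ((t⁻¹ : ℝ) : EReal)) (𝓝[>] (0 : ℝ))
        (𝓝 ((E' u v : ℝ) : EReal)))
    (p : H × H) :
    p ∈ jSubgradient j E ↔
      ∃ u : V, E u < ⊤ ∧ j u = p.1 ∧ ∀ v : V, E' u v = (inner ℝ p.2 (j v) : ℝ) := by

  constructor
  · rintro ⟨u, hu, hju, hle⟩
    refine ⟨u, hu, hju, fun v => ?_⟩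
    have key : ∀ w : V, ((inner ℝ p.2 (j w) : ℝ) : EReal) ≤ ((E' u w : ℝ) : EReal) := by
      intro w
      have := hle w
      rwa [(hdiff u hu w).liminf_eq] at this
    have h1 : (inner ℝ p.2 (j v) : ℝ) ≤ E' u v := EReal.coe_le_coe_iff.mp (key v)
    have h2 : (inner ℝ p.2 (j (-v)) : ℝ) ≤ E' u (-v) := EReal.coe_le_coe_iff.mp (key (-v))
    simp only [map_neg, inner_neg_right, LinearMap.map_neg, neg_le_neg_iff] at h2
    linarith
  · rintro ⟨u, hu, hju, heq⟩
    refine ⟨u, hu, hju, fun v => ?_⟩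
    rw [(hdiff u hu v).liminf_eq, ← heq v]
end

section
/- Assume E is j-semiconvex. Then for every u ∈ D(∂_j E) and every elliptic extension û ∈ Ê_u one has E(û) = inf { E(v̂) : v̂ ∈ V, j(v̂) = u }. In particular E is constant on Ê_u. -/
open Filter Topology

variable {V : Type*} [AddCommGroup V] [Module ℝ V] [TopologicalSpace V]
variable {H : Type*} [NormedAddCommGroup H] [InnerProductSpace ℝ H] [CompleteSpace H]

noncomputable def shifted (j : V →ₗ[ℝ] H) (E : V → EReal) (ω : ℝ) (u : V) : EReal :=
  E u + ((ω / 2 * ‖j u‖ ^ 2 : ℝ) : EReal)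

def ellipticExt (j : V →ₗ[ℝ] H) (E : V → EReal) (u : H) : Set V :=
  {uh | E uh < ⊤ ∧ j uh = u ∧ ∀ vh ∈ LinearMap.ker j,
    (0 : EReal) ≤ liminf (fun t : ℝ => (E (uh + t • vh) - E uh) * ((t⁻¹ : ℝ) : EReal))
      (𝓝[>] (0 : ℝ))}

theorem key (j : V →ₗ[ℝ] H) (E : V → EReal) (ω : ℝ) (hconv : ERealConvex (shifted j E ω))
    (u : H) (uh : V) (huh : uh ∈ ellipticExt j E u) (vh : V) (hv : j vh = u) :
    E uh ≤ E vh := by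
  by_cases hbot : E uh = ⊥
  · rw [hbot]; exact bot_le
  obtain ⟨r, hr⟩ : ∃ r : ℝ, E uh = (r : EReal) := ⟨(E uh).toReal, (EReal.coe_toReal huh.1.ne hbot).symm⟩
  have hw : vh - uh ∈ LinearMap.ker j := by
    rw [LinearMap.mem_ker, map_sub, hv, huh.2.1, sub_self]
  have hlim := huh.2.2 _ hw
  set c : ℝ := ω / 2 * ‖u‖ ^ 2 with hcdef
  have hev : ∀ᶠ t in 𝓝[>] (0:ℝ),
      (E (uh + t • (vh - uh)) - E uh) * ((t⁻¹ : ℝ) : EReal) ≤ E vh - (r : EReal) := by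
    filter_upwards [Ioo_mem_nhdsGT_of_mem (by simp : (0:ℝ) ∈ Set.Ico (0:ℝ) 1)] with t ht
    have hc := hconv vh uh t ht.1.le ht.2.le
    have hpt : t • vh + (1 - t) • uh = uh + t • (vh - uh) := by module
    rw [hpt] at hc
    unfold shifted at hc
    have hjw : j (uh + t • (vh - uh)) = u := by
      simp [map_add, map_smul, map_sub, huh.2.1, hv]
    rw [hjw, huh.2.1, hv, hr] at hc
    rw [hr]
    by_cases hvt : E vh = ⊤
    · rw [hvt, EReal.top_sub_coe]; exact le_top
    by_cases hvb : E vh = ⊥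
    · rw [hvb] at hc ⊢
      rw [EReal.bot_add, EReal.coe_mul_bot_of_pos ht.1, EReal.bot_add] at hc
      have hX : E (uh + t • (vh - uh)) = ⊥ := by
        rcases EReal.add_eq_bot_iff.1 (le_bot_iff.1 hc) with h | h
        · exact h
        · exact absurd h (EReal.coe_ne_bot _)
      rw [hX, EReal.bot_sub, EReal.bot_mul_coe_of_pos (inv_pos.2 ht.1)]
    obtain ⟨s, hs⟩ : ∃ s : ℝ, E vh = (s : EReal) := ⟨(E vh).toReal, (EReal.coe_toReal hvt hvb).symm⟩
    rw [hs] at hc ⊢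
    have hc' : E (uh + t • (vh - uh)) + (c : EReal) ≤ ((t * (s + c) + (1 - t) * (r + c) : ℝ) : EReal) := by
      convert hc using 1
      simp only [EReal.coe_add, EReal.coe_mul, hcdef]
    have h2 : E (uh + t • (vh - uh)) ≤ ((t * s + (1 - t) * r : ℝ) : EReal) := by
      have h := EReal.sub_le_sub hc' (le_refl ((c : ℝ) : EReal))
      rw [EReal.add_sub_cancel_right] at h
      refine h.trans_eq ?_
      rw [← EReal.coe_sub]
      norm_cast
      ring
    have h3 : E (uh + t • (vh - uh)) - (r : EReal) ≤ ((t * (s - r) : ℝ) : EReal) := by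
      have h := EReal.sub_le_sub h2 (le_refl ((r : ℝ) : EReal))
      refine h.trans_eq ?_
      rw [← EReal.coe_sub]
      norm_cast
      ring
    have h4 := mul_le_mul_of_nonneg_right h3
      (by exact_mod_cast inv_nonneg.2 ht.1.le : (0 : EReal) ≤ ((t⁻¹ : ℝ) : EReal))
    refine h4.trans_eq ?_
    rw [← EReal.coe_mul, ← EReal.coe_sub]
    norm_cast
    rw [mul_comm t (s - r), mul_assoc, mul_inv_cancel₀ ht.1.ne', mul_one]
  have h5 : liminf (fun t : ℝ => (E (uh + t • (vh - uh)) - E uh) * ((t⁻¹ : ℝ) : EReal))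
      (𝓝[>] (0:ℝ)) ≤ E vh - (r : EReal) :=
    liminf_le_of_frequently_le' hev.frequently
  have h6 : (0 : EReal) ≤ E vh - (r : EReal) := hlim.trans h5
  have h7 := (EReal.le_sub_iff_add_le (Or.inl (EReal.coe_ne_bot r))
    (Or.inl (EReal.coe_ne_top r))).1 h6
  rw [zero_add] at h7
  rw [hr]
  exact h7

/-- if `E` is `j`-semiconvex, then for every `u ∈ D(∂_j E)` and every elliptic
extension `û ∈ Ê_u` one has `E(û) = inf { E(v̂) : j(v̂) = u }`; in particular `E` is constant
on `Ê_u`. -/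
theorem ellipticExt_energy_inf (j : V →ₗ[ℝ] H) (hj : Continuous j) (E : V → EReal)
    (ω : ℝ) (hconv : ERealConvex (shifted j E ω))
    (u : H) (hu : ∃ f : H, (u, f) ∈ jSubgradient j E)
    (uh : V) (huh : uh ∈ ellipticExt j E u) :
    E uh = ⨅ vh : {vh : V // j vh = u}, E (vh : V) ∧
      ∀ uh' ∈ ellipticExt j E u, E uh' = E uh := by
  constructor
  · refine le_antisymm (le_iInf fun vh => key j E ω hconv u uh huh vh vh.2) ?_
    exact iInf_le_of_le ⟨uh, huh.2.1⟩ le_rfl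
  · intro uh' huh'
    exact le_antisymm (key j E ω hconv u uh' huh' uh huh.2.1)
      (key j E ω hconv u uh huh uh' huh'.2.1)
end

section
/- Define E₀(u) := inf { E(û) : û ∈ V, j(û) = u } and E₁(u) := sup over open neighbourhoods U of u in H of inf { E(v̂) : j(v̂) ∈ U }, for u ∈ H. If E : V → ℝ∪{+∞} is convex, proper, lower semicontinuous and j-elliptic, then E₀ = E₁ on H. -/
open Filter Topology

variable {V : Type*} [AddCommGroup V] [Module ℝ V] [TopologicalSpace V]
variable {H : Type*} [NormedAddCommGroup H] [InnerProductSpace ℝ H] [CompleteSpace H]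

def CoerciveE (E : V → EReal) : Prop :=
  ∀ c : ℝ, IsCompact (closure {u : V | E u ≤ (c : EReal)})

/-- `E₀(u) = inf { E(û) : j(û) = u }`. -/
noncomputable def Ezero (j : V →ₗ[ℝ] H) (E : V → EReal) (u : H) : EReal :=
  ⨅ vh : {vh : V // j vh = u}, E (vh : V)

/-- `E₁(u) = sup over open neighbourhoods U of u of inf { E(v̂) : j(v̂) ∈ U }`. -/
noncomputable def Eone (j : V →ₗ[ℝ] H) (E : V → EReal) (u : H) : EReal :=
  ⨆ U : {U : Set H // IsOpen U ∧ u ∈ U}, ⨅ vh : {vh : V // j vh ∈ (U : Set H)}, E (vh : V)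

lemma aux_norm_bound {u w : H} {r : ℝ} (hr : 0 < r) (hw : w ∈ Metric.ball u r) :
    ‖w‖ ^ 2 ≤ (‖u‖ + r) ^ 2 := by
  have h1 : ‖w‖ ≤ ‖u‖ + r := by
    have := mem_ball_iff_norm.mp hw
    have h2 : ‖w‖ - ‖u‖ ≤ ‖w - u‖ := norm_sub_norm_le _ _
    linarith [le_of_lt this]
  have h0 : (0:ℝ) ≤ ‖w‖ := norm_nonneg _
  nlinarith

/-- if `E` is convex, proper, lower semicontinuous and `j`-elliptic, then
`E₀ = E₁` on `H`. -/
theorem Ezero_eq_Eone (j : V →ₗ[ℝ] H) (hj : Continuous j) (E : V → EReal)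
    (hconv : ERealConvex E) (hproper : ∃ u, E u < ⊤) (hlsc : LowerSemicontinuous E)
    (helliptic : ∃ ω : ℝ, 0 ≤ ω ∧ ERealConvex (shifted j E ω) ∧
      LowerSemicontinuous (shifted j E ω) ∧ CoerciveE (shifted j E ω)) :
    Ezero j E = Eone j E := by
  obtain ⟨ω, hω, _, hlscS, hcoer⟩ := helliptic
  funext u
  refine le_antisymm ?_ ?_
  · -- hard direction : Ezero u ≤ Eone u
    by_cases hb : Eone j E u = ⊤
    · rw [hb]; exact le_top
    set b := Eone j E u with hbdef
    -- choose a minimizing sequence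
    set t : ℕ → EReal := fun n => if b = ⊥ then ((-(n:ℝ) : ℝ) : EReal)
      else b + ((1/(n+1) : ℝ) : EReal) with ht
    have hbt : ∀ n : ℕ, b < t n := by
      intro n
      by_cases h : b = ⊥
      · simp only [ht, if_pos h]
        exact h ▸ EReal.bot_lt_coe _
      · simp only [ht, if_neg h]
        lift b to ℝ using ⟨hb, h⟩ with β
        rw [← EReal.coe_add, EReal.coe_lt_coe_iff]
        have : (0:ℝ) < 1/(n+1) := by positivity
        linarith
    have hsel : ∀ n : ℕ, ∃ v : V, j v ∈ Metric.ball u (1/(n+1)) ∧ E v < t n := by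
      intro n
      have hball : (0:ℝ) < 1/(n+1) := by positivity
      have hinf : (⨅ vh : {vh : V // j vh ∈ Metric.ball u (1/(n+1))}, E (vh : V)) ≤ b := by
        rw [hbdef, Eone]
        exact le_iSup (fun U : {U : Set H // IsOpen U ∧ u ∈ U} =>
          ⨅ vh : {vh : V // j vh ∈ (U : Set H)}, E (vh : V))
          ⟨Metric.ball u (1/(n+1)), Metric.isOpen_ball, Metric.mem_ball_self hball⟩
      have hlt : (⨅ vh : {vh : V // j vh ∈ Metric.ball u (1/(n+1))}, E (vh : V)) < t n :=
        lt_of_le_of_lt hinf (hbt n)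
      obtain ⟨⟨v, hv⟩, hvlt⟩ := iInf_lt_iff.mp hlt
      exact ⟨v, hv, hvlt⟩
    choose seq hseq1 hseq2 using hsel
    -- uniform bound on shifted values
    have hnormb : ∀ n : ℕ, (ω/2 * ‖j (seq n)‖ ^ 2 : ℝ) ≤ ω/2 * (‖u‖ + 1)^2 := by
      intro n
      have h1 : ‖j (seq n)‖ ^ 2 ≤ (‖u‖ + (1/(n+1) : ℝ))^2 := by
        refine aux_norm_bound (by positivity) (hseq1 n)
      have h2 : (‖u‖ + (1/(n+1):ℝ))^2 ≤ (‖u‖ + 1)^2 := by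
        have h3 : (1/((n:ℝ)+1)) ≤ 1 := by
          rw [div_le_one (by positivity)]; simp
        nlinarith [norm_nonneg u, le_of_lt (show (0:ℝ) < 1/((n:ℝ)+1) by positivity)]
      nlinarith
    have hEb : ∀ n : ℕ, E (seq n) ≤ ((if b = ⊥ then 0 else b.toReal + 1 : ℝ) : EReal) := by
      intro n
      refine le_trans (hseq2 n).le ?_
      by_cases h : b = ⊥
      · simp only [ht, if_pos h, EReal.coe_le_coe_iff]
        simp [Nat.cast_nonneg]
      · simp only [ht, if_neg h]
        lift b to ℝ using ⟨hb, h⟩ with β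
        rw [← EReal.coe_add, EReal.coe_le_coe_iff, EReal.toReal_coe]
        have : (1/((n:ℝ)+1)) ≤ 1 := by rw [div_le_one (by positivity)]; simp
        linarith
    set c : ℝ := (if b = ⊥ then 0 else b.toReal + 1) + ω/2 * (‖u‖ + 1)^2 with hc
    have hmem : ∀ n : ℕ, seq n ∈ {v : V | shifted j E ω v ≤ (c : EReal)} := by
      intro n
      show shifted j E ω (seq n) ≤ (c : EReal)
      rw [shifted, hc, EReal.coe_add]
      exact add_le_add (hEb n) (EReal.coe_le_coe_iff.mpr (hnormb n))
    -- cluster point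
    have hK := hcoer c
    have hle : map seq atTop ≤ 𝓟 (closure {v : V | shifted j E ω v ≤ (c : EReal)}) := by
      rw [le_principal_iff, mem_map]
      exact Eventually.of_forall fun n => subset_closure (hmem n)
    obtain ⟨vhat, _, hcl⟩ := hK.exists_clusterPt hle
    have hmcp : MapClusterPt vhat atTop seq := hcl
    -- j vhat = u
    have htend : Tendsto (fun n => j (seq n)) atTop (𝓝 u) := by
      rw [Metric.tendsto_atTop]
      intro ε hε
      obtain ⟨N, hN⟩ := exists_nat_gt (1/ε)
      refine ⟨N, fun n hn => ?_⟩
      have h1 := hseq1 n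
      rw [Metric.mem_ball] at h1
      have h2 : (1:ℝ)/(n+1) < ε := by
        rw [div_lt_iff₀ (by positivity)]
        rw [div_lt_iff₀ hε] at hN
        have : (N:ℝ) ≤ n := Nat.cast_le.mpr hn
        nlinarith
      linarith
    have hju : j vhat = u := by
      have hcp2 : MapClusterPt (j vhat) atTop (fun n => j (seq n)) :=
        hmcp.continuousAt_comp hj.continuousAt
      have hcp3 : ClusterPt (j vhat) (map (fun n => j (seq n)) atTop) := hcp2
      exact eq_of_nhds_neBot (hcp3.mono htend)
    -- shifted vhat ≤ b + ω/2 ‖u‖²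
    set r : ℝ := ω/2 * ‖u‖^2 with hr
    have hkey : shifted j E ω vhat ≤ b + (r : EReal) := by
      by_contra hcon
      push_neg at hcon
      obtain ⟨y, hy1, hy2⟩ := EReal.exists_between_coe_real hcon
      have hfreq : ∃ᶠ n in atTop, (y : EReal) < shifted j E ω (seq n) := by
        have hnhds := hlscS vhat (y : EReal) hy2
        exact (mapClusterPt_iff_frequently.mp hmcp) _ hnhds
      have hev : ∀ᶠ n in atTop, shifted j E ω (seq n) < (y : EReal) := by
        by_cases h : b = ⊥
        · -- shifted seq n ≤ -n + ω/2(‖u‖+1)² → -∞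
          have htd : Tendsto (fun n : ℕ => -(n:ℝ) + ω/2*(‖u‖+1)^2) atTop atBot := by
            exact Tendsto.atBot_add (tendsto_neg_atBot_iff.mpr tendsto_natCast_atTop_atTop)
              tendsto_const_nhds
          filter_upwards [htd.eventually_lt_atBot y] with n hn
          have h1 : shifted j E ω (seq n) ≤ ((-(n:ℝ) + ω/2*(‖u‖+1)^2 : ℝ) : EReal) := by
            rw [shifted, EReal.coe_add]
            refine add_le_add ?_ (EReal.coe_le_coe_iff.mpr (hnormb n))
            have := hseq2 n
            simp only [ht, if_pos h] at this
            exact this.le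
          exact lt_of_le_of_lt h1 (EReal.coe_lt_coe_iff.mpr hn)
        · lift b to ℝ using ⟨hb, h⟩ with β
          have hylt : β + r < y := by
            rw [← EReal.coe_add, EReal.coe_lt_coe_iff] at hy1; exact hy1
          have htd : Tendsto (fun n : ℕ => β + 1/(n+1) + ω/2*(‖u‖+1/(n+1))^2)
              atTop (𝓝 (β + 0 + ω/2*(‖u‖+0)^2)) := by
            have h0 : Tendsto (fun n : ℕ => (1:ℝ)/(n+1)) atTop (𝓝 0) :=
              tendsto_one_div_add_atTop_nhds_zero_nat
            exact ((tendsto_const_nhds.add h0).add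
              ((tendsto_const_nhds.add h0).pow 2 |>.const_mul (ω/2)))
          have hlim : β + 0 + ω/2*(‖u‖+0)^2 = β + r := by show _ = β + ω/2 * ‖u‖^2; ring
          rw [hlim] at htd
          filter_upwards [htd.eventually_lt_const hylt] with n hn
          have h1 : shifted j E ω (seq n) <
              ((β + 1/(n+1) + ω/2*(‖u‖+1/(n+1))^2 : ℝ) : EReal) := by
            rw [shifted]
            have hE : E (seq n) < ((β + 1/(n+1) : ℝ) : EReal) := by
              have := hseq2 n
              simp only [ht, if_neg h, ← EReal.coe_add] at this
              exact this
            have hnrm : (ω/2 * ‖j (seq n)‖^2 : ℝ) ≤ ω/2*(‖u‖+1/(n+1))^2 := by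
              have := aux_norm_bound (by positivity : (0:ℝ) < 1/(n+1)) (hseq1 n)
              nlinarith
            calc E (seq n) + ((ω/2 * ‖j (seq n)‖^2 : ℝ) : EReal)
                ≤ E (seq n) + ((ω/2*(‖u‖+1/(n+1))^2 : ℝ) : EReal) :=
                  add_le_add_right (EReal.coe_le_coe_iff.mpr hnrm) _
              _ < ((β + 1/(n+1) : ℝ) : EReal) + ((ω/2*(‖u‖+1/(n+1))^2 : ℝ) : EReal) := by
                  exact EReal.add_lt_add_right_coe hE _
              _ = ((β + 1/(n+1) + ω/2*(‖u‖+1/(n+1))^2 : ℝ) : EReal) := by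
                  rw [← EReal.coe_add]
          exact lt_of_lt_of_le h1 (EReal.coe_le_coe_iff.mpr hn.le)
      obtain ⟨n, hn1, hn2⟩ := (hfreq.and_eventually hev).exists
      exact absurd hn2 (not_lt.mpr hn1.le)
    -- conclude
    have hEv : E vhat ≤ b := by
      have hsv : shifted j E ω vhat = E vhat + (r : EReal) := by
        rw [shifted, hju, hr]
      rw [hsv] at hkey
      exact (EReal.addLECancellable_coe r).add_le_add_iff_right.mp hkey
    have h0 : Ezero j E u ≤ E vhat := by
      rw [Ezero]; exact iInf_le (fun vh : {vh : V // j vh = u} => E (vh : V)) ⟨vhat, hju⟩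
    exact le_trans h0 hEv
  · -- easy direction : Eone u ≤ Ezero u
    refine iSup_le ?_
    rintro ⟨U, hU, hu⟩
    refine le_iInf ?_
    rintro ⟨v, hv⟩
    exact iInf_le (fun vh : {vh : V // j vh ∈ U} => E (vh : V)) ⟨v, hv ▸ hu⟩
end

section
/- Let E be convex, proper, lower semicontinuous and j-elliptic, and set E₀(u) = inf{E(û) : j(û) = u}. Then for every u ∈ H and every (v,f) ∈ ∂_j E one has E₀(u) ≥ ⟨f, u − v⟩ + E₀(v); that is, ∂_j E ⊆ ∂E₀, the classical subgradient of E₀ on H. -/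
open Filter Topology

variable {V : Type*} [AddCommGroup V] [Module ℝ V] [TopologicalSpace V]
variable {H : Type*} [NormedAddCommGroup H] [InnerProductSpace ℝ H] [CompleteSpace H]

/-- for `E` convex, proper, lower semicontinuous and `j`-elliptic, one has
`E₀(u) ≥ ⟨f, u − v⟩ + E₀(v)` for all `u ∈ H` and `(v,f) ∈ ∂_j E`; that is,
`∂_j E ⊆ ∂ E₀`. -/
theorem jSubgradient_subset_subgradient_Ezero (j : V →ₗ[ℝ] H) (hj : Continuous j)
    (E : V → EReal) (hconv : ERealConvex E) (hproper : ∃ u, E u < ⊤)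
    (hlsc : LowerSemicontinuous E)
    (helliptic : ∃ ω : ℝ, 0 ≤ ω ∧ ERealConvex (shifted j E ω) ∧ CoerciveE (shifted j E ω)) :
    ∀ u : H, ∀ v f : H, (v, f) ∈ jSubgradient j E →
      ((inner ℝ f (u - v) : ℝ) : EReal) + Ezero j E v ≤ Ezero j E u := by
  intro u v f hvf
  obtain ⟨uh, huhtop, hjuh, hkey⟩ := hvf
  refine le_iInf ?_
  rintro ⟨wh, hjwh⟩
  by_cases hbot : E uh = ⊥
  · have h1 : Ezero j E v ≤ E uh := by
      exact iInf_le (fun vh : {vh : V // j vh = v} => E (vh : V)) ⟨uh, hjuh⟩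
    rw [hbot, le_bot_iff] at h1
    rw [h1, EReal.add_bot]
    exact bot_le
  · obtain ⟨a, ha⟩ : ∃ a : ℝ, E uh = (a : EReal) :=
      ⟨(E uh).toReal, (EReal.coe_toReal (ne_of_lt huhtop) hbot).symm⟩
    set w := wh - uh with hwdef
    have hjw : j w = u - v := by rw [hwdef, map_sub, hjwh, hjuh]
    have hfw := hkey w
    rw [hjw] at hfw
    have heq : ∀ t : ℝ, t • wh + (1 - t) • uh = uh + t • w := by
      intro t; rw [hwdef]; module
    by_cases hwhtop : E wh = ⊤
    · show _ ≤ E wh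
      rw [hwhtop]; exact le_top
    by_cases hwhbot : E wh = ⊥
    · exfalso
      have hq : ∀ t : ℝ, t ∈ Set.Ioo (0:ℝ) 1 →
          (E (uh + t • w) - E uh) * ((t⁻¹ : ℝ) : EReal) ≤ (⊥ : EReal) := by
        intro t ht
        have hco := hconv wh uh t ht.1.le ht.2.le
        rw [heq t, hwhbot, ha, EReal.mul_bot_of_pos (by exact_mod_cast ht.1),
          EReal.bot_add, le_bot_iff] at hco
        rw [hco, ha, EReal.bot_sub,
          EReal.bot_mul_of_pos (by exact_mod_cast inv_pos.mpr ht.1)]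
      have hev : ∀ᶠ t in 𝓝[>] (0:ℝ),
          (E (uh + t • w) - E uh) * ((t⁻¹ : ℝ) : EReal) ≤ (⊥ : EReal) :=
        Filter.eventually_of_mem (Ioo_mem_nhdsGT_of_mem ⟨le_refl 0, one_pos⟩) hq
      have hlim := Filter.liminf_le_liminf hev
      rw [Filter.liminf_const (⊥ : EReal)] at hlim
      exact (EReal.coe_ne_bot _) (le_bot_iff.mp (hfw.trans hlim))
    · obtain ⟨b, hb⟩ : ∃ b : ℝ, E wh = (b : EReal) :=
        ⟨(E wh).toReal, (EReal.coe_toReal hwhtop hwhbot).symm⟩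
      have hq : ∀ t : ℝ, t ∈ Set.Ioo (0:ℝ) 1 →
          (E (uh + t • w) - E uh) * ((t⁻¹ : ℝ) : EReal) ≤ ((b - a : ℝ) : EReal) := by
        intro t ht
        have hco := hconv wh uh t ht.1.le ht.2.le
        rw [heq t, hb, ha, ← EReal.coe_mul, ← EReal.coe_mul, ← EReal.coe_add] at hco
        rcases eq_or_ne (E (uh + t • w)) ⊥ with hEb | hEb
        · rw [hEb, ha, EReal.bot_sub,
            EReal.bot_mul_of_pos (by exact_mod_cast inv_pos.mpr ht.1)]
          exact bot_le
        · obtain ⟨c, hc⟩ : ∃ c : ℝ, E (uh + t • w) = (c : EReal) :=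
            ⟨(E (uh + t • w)).toReal,
              (EReal.coe_toReal (lt_of_le_of_lt hco (EReal.coe_lt_top _)).ne hEb).symm⟩
          rw [hc, EReal.coe_le_coe_iff] at hco
          rw [hc, ha, ← EReal.coe_sub, ← EReal.coe_mul, EReal.coe_le_coe_iff]
          have h1 : c - a ≤ t * (b - a) := by nlinarith
          calc (c - a) * t⁻¹ ≤ t * (b - a) * t⁻¹ :=
                mul_le_mul_of_nonneg_right h1 (inv_nonneg.mpr ht.1.le)
            _ = b - a := by
                rw [mul_comm t (b - a), mul_assoc, mul_inv_cancel₀ (ne_of_gt ht.1), mul_one]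
      have hev : ∀ᶠ t in 𝓝[>] (0:ℝ),
          (E (uh + t • w) - E uh) * ((t⁻¹ : ℝ) : EReal) ≤ ((b - a : ℝ) : EReal) :=
        Filter.eventually_of_mem (Ioo_mem_nhdsGT_of_mem ⟨le_refl 0, one_pos⟩) hq
      have hlim := Filter.liminf_le_liminf hev
      rw [Filter.liminf_const ((b - a : ℝ) : EReal)] at hlim
      have hfr : (inner ℝ f (u - v) : ℝ) ≤ b - a := by
        exact_mod_cast hfw.trans hlim
      have h2 : Ezero j E v ≤ (a : EReal) := by
        rw [← ha]; exact iInf_le (fun vh : {vh : V // j vh = v} => E (vh : V)) ⟨uh, hjuh⟩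
      show _ ≤ E wh
      rw [hb]
      calc ((inner ℝ f (u - v) : ℝ) : EReal) + Ezero j E v
          ≤ ((inner ℝ f (u - v) : ℝ) : EReal) + (a : EReal) := add_le_add_right h2 _
        _ = (((inner ℝ f (u - v) : ℝ) + a : ℝ) : EReal) := (EReal.coe_add _ _).symm
        _ ≤ (b : EReal) := EReal.coe_le_coe_iff.mpr (by linarith)
end
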